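/- Let n ≥ 1, let 0 < a ≤ b, and let R be an n×n real symmetric matrix with eigenvalues e₁, …, eₙ (repeated according to multiplicity). Then inf{ tr(PR) : P an n×n real symmetric matrix with aI ≤ P ≤ bI } = a·Σ_{eᵢ>0} eᵢ + b·Σ_{eᵢ<0} eᵢ = P⁻(R, a, b), and sup{ tr(PR) : P an n×n real symmetric matrix with aI ≤ P ≤ bI } = a·Σ_{eᵢ<0} eᵢ + b·Σ_{eᵢ>0} eᵢ = P⁺(R, a, b). -/

import Mathlib

open Set

noncomputable section

/-- The operator norm of an `n × n` real matrix, acting on Euclidean space. -/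
noncomputable def matOpNorm {n : ℕ} (A : Matrix (Fin n) (Fin n) ℝ) : ℝ :=
  ‖(LinearMap.toContinuousLinearMap (Matrix.toEuclideanLin A))‖

/-- `F` is uniformly elliptic with ellipticity constant `Λ`. -/
def UniformlyElliptic {n : ℕ} (Λ : ℝ) (F : Matrix (Fin n) (Fin n) ℝ → ℝ) : Prop :=
  ∀ M N : Matrix (Fin n) (Fin n) ℝ, M.IsSymm → N.IsSymm → N.PosSemidef →
    Λ⁻¹ * matOpNorm N ≤ F (M + N) - F M ∧ F (M + N) - F M ≤ Λ * matOpNorm N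

/-- Pucci minimal operator `P⁻(R, a, b) = a ∑_{eᵢ>0} eᵢ + b ∑_{eᵢ<0} eᵢ`. -/
noncomputable def pucciMinus {n : ℕ} (R : Matrix (Fin n) (Fin n) ℝ) (a b : ℝ) : ℝ :=
  if h : R.IsHermitian then
    a * ∑ i, max (h.eigenvalues i) 0 + b * ∑ i, min (h.eigenvalues i) 0
  else 0

/-- Pucci maximal operator `P⁺(R, a, b) = a ∑_{eᵢ<0} eᵢ + b ∑_{eᵢ>0} eᵢ`. -/
noncomputable def pucciPlus {n : ℕ} (R : Matrix (Fin n) (Fin n) ℝ) (a b : ℝ) : ℝ :=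
  if h : R.IsHermitian then
    a * ∑ i, min (h.eigenvalues i) 0 + b * ∑ i, max (h.eigenvalues i) 0
  else 0

end

namespace PucciAux

open Matrix Finset

variable {n : ℕ}

lemma psd_diag_nonneg {M : Matrix (Fin n) (Fin n) ℝ} (hM : M.PosSemidef) (i : Fin n) :
    0 ≤ M i i := by
  simpa using hM.2 (Finsupp.single i 1)

lemma trace_PR (R P : Matrix (Fin n) (Fin n) ℝ) (hRh : R.IsHermitian) :
    (P * R).trace = ∑ i, ((star (hRh.eigenvectorUnitary : Matrix (Fin n) (Fin n) ℝ)) * P *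
      (hRh.eigenvectorUnitary : Matrix (Fin n) (Fin n) ℝ)) i i * hRh.eigenvalues i := by
  set U : Matrix (Fin n) (Fin n) ℝ := (hRh.eigenvectorUnitary : Matrix (Fin n) (Fin n) ℝ)
  have hsp : R = U * Matrix.diagonal hRh.eigenvalues * star U := by
    have := hRh.spectral_theorem
    simpa using this
  conv_lhs => rw [hsp]
  rw [show P * (U * Matrix.diagonal hRh.eigenvalues * star U)
      = (P * U * Matrix.diagonal hRh.eigenvalues) * star U by simp only [Matrix.mul_assoc],
    Matrix.trace_mul_comm]
  rw [show star U * (P * U * Matrix.diagonal hRh.eigenvalues)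
      = (star U * P * U) * Matrix.diagonal hRh.eigenvalues by simp only [Matrix.mul_assoc]]
  simp [Matrix.trace, Matrix.diag, Matrix.mul_diagonal]

lemma conj_sub_smul (U P : Matrix (Fin n) (Fin n) ℝ) (hU : star U * U = 1) (t : ℝ) :
    star U * (P - t • (1 : Matrix (Fin n) (Fin n) ℝ)) * U
      = star U * P * U - t • (1 : Matrix (Fin n) (Fin n) ℝ) := by
  rw [Matrix.mul_sub, Matrix.sub_mul, Matrix.mul_smul, Matrix.mul_one, Matrix.smul_mul, hU]

lemma conj_smul_sub (U P : Matrix (Fin n) (Fin n) ℝ) (hU : star U * U = 1) (t : ℝ) :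
    star U * (t • (1 : Matrix (Fin n) (Fin n) ℝ) - P) * U
      = t • (1 : Matrix (Fin n) (Fin n) ℝ) - star U * P * U := by
  rw [Matrix.mul_sub, Matrix.sub_mul, Matrix.mul_smul, Matrix.mul_one, Matrix.smul_mul, hU]

lemma diag_mem {a b : ℝ} {R P : Matrix (Fin n) (Fin n) ℝ} (hRh : R.IsHermitian)
    (h1 : (P - a • (1 : Matrix (Fin n) (Fin n) ℝ)).PosSemidef)
    (h2 : (b • (1 : Matrix (Fin n) (Fin n) ℝ) - P).PosSemidef) (i : Fin n) :
    a ≤ ((star (hRh.eigenvectorUnitary : Matrix (Fin n) (Fin n) ℝ)) * P *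
        (hRh.eigenvectorUnitary : Matrix (Fin n) (Fin n) ℝ)) i i ∧
      ((star (hRh.eigenvectorUnitary : Matrix (Fin n) (Fin n) ℝ)) * P *
        (hRh.eigenvectorUnitary : Matrix (Fin n) (Fin n) ℝ)) i i ≤ b := by
  set U : Matrix (Fin n) (Fin n) ℝ := (hRh.eigenvectorUnitary : Matrix (Fin n) (Fin n) ℝ)
  have hU2 : star U * U = 1 := Matrix.mem_unitaryGroup_iff'.mp hRh.eigenvectorUnitary.2
  have k1 : (star U * P * U - a • (1 : Matrix (Fin n) (Fin n) ℝ)).PosSemidef := by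
    rw [← conj_sub_smul U P hU2]
    simpa [Matrix.star_eq_conjTranspose] using h1.conjTranspose_mul_mul_same U
  have k2 : (b • (1 : Matrix (Fin n) (Fin n) ℝ) - star U * P * U).PosSemidef := by
    rw [← conj_smul_sub U P hU2]
    simpa [Matrix.star_eq_conjTranspose] using h2.conjTranspose_mul_mul_same U
  have e1 := psd_diag_nonneg k1 i
  have e2 := psd_diag_nonneg k2 i
  simp only [Matrix.sub_apply, Matrix.smul_apply, Matrix.one_apply_eq, smul_eq_mul,
    mul_one] at e1 e2
  constructor <;> linarith

lemma mem_set {a b : ℝ} (R : Matrix (Fin n) (Fin n) ℝ) (hRh : R.IsHermitian)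
    (c : Fin n → ℝ) (h1 : ∀ i, a ≤ c i) (h2 : ∀ i, c i ≤ b) :
    (∑ i, c i * hRh.eigenvalues i) ∈ {x : ℝ | ∃ P : Matrix (Fin n) (Fin n) ℝ, P.IsSymm ∧
        (P - a • (1 : Matrix (Fin n) (Fin n) ℝ)).PosSemidef ∧
        (b • (1 : Matrix (Fin n) (Fin n) ℝ) - P).PosSemidef ∧ x = (P * R).trace} := by
  set U : Matrix (Fin n) (Fin n) ℝ := (hRh.eigenvectorUnitary : Matrix (Fin n) (Fin n) ℝ)
  have hU1 : U * star U = 1 := Matrix.mem_unitaryGroup_iff.mp hRh.eigenvectorUnitary.2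
  have hU2 : star U * U = 1 := Matrix.mem_unitaryGroup_iff'.mp hRh.eigenvectorUnitary.2
  set P : Matrix (Fin n) (Fin n) ℝ := U * Matrix.diagonal c * star U with hPdef
  have hconj : ∀ d : Fin n → ℝ, U * Matrix.diagonal d * star U
      = U * Matrix.diagonal d * (star U : Matrix (Fin n) (Fin n) ℝ) := fun _ => rfl
  have hda : P - a • (1 : Matrix (Fin n) (Fin n) ℝ)
      = U * Matrix.diagonal (fun i => c i - a) * star U := by
    have hd : Matrix.diagonal (fun i => c i - a)
        = Matrix.diagonal c - a • (1 : Matrix (Fin n) (Fin n) ℝ) := by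
      ext i j
      by_cases h : i = j <;> simp [Matrix.diagonal_apply, Matrix.one_apply, h]
    rw [hd, Matrix.mul_sub, Matrix.sub_mul, Matrix.mul_smul, Matrix.mul_one, Matrix.smul_mul,
      hU1, hPdef]
  have hdb : b • (1 : Matrix (Fin n) (Fin n) ℝ) - P
      = U * Matrix.diagonal (fun i => b - c i) * star U := by
    have hd : Matrix.diagonal (fun i => b - c i)
        = b • (1 : Matrix (Fin n) (Fin n) ℝ) - Matrix.diagonal c := by
      ext i j
      by_cases h : i = j <;> simp [Matrix.diagonal_apply, Matrix.one_apply, h]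
    rw [hd, Matrix.mul_sub, Matrix.sub_mul, Matrix.mul_smul, Matrix.mul_one, Matrix.smul_mul,
      hU1, hPdef]
  refine ⟨P, ?_, ?_, ?_, ?_⟩
  · have hH : P.IsHermitian := by
      rw [hPdef]
      simpa [Matrix.star_eq_conjTranspose, Matrix.conjTranspose_eq_transpose_of_trivial] using
        Matrix.isHermitian_mul_mul_conjTranspose U (Matrix.isHermitian_diagonal c)
    rwa [Matrix.IsSymm, ← Matrix.conjTranspose_eq_transpose_of_trivial]
  · rw [hda]
    exact (Matrix.PosSemidef.diagonal fun i => sub_nonneg.mpr (h1 i)).mul_mul_conjTranspose_same U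
  · rw [hdb]
    exact (Matrix.PosSemidef.diagonal fun i => sub_nonneg.mpr (h2 i)).mul_mul_conjTranspose_same U
  · rw [trace_PR R P hRh]
    have : star U * P * U = Matrix.diagonal c := by
      rw [hPdef, show star U * (U * Matrix.diagonal c * star U) * U
          = (star U * U) * Matrix.diagonal c * (star U * U) by simp only [Matrix.mul_assoc],
        hU2]
      simp
    rw [this]
    simp [Matrix.diagonal_apply_eq]

lemma ptwise_min {a b q e : ℝ} (h1 : a ≤ q) (h2 : q ≤ b) :
    a * max e 0 + b * min e 0 ≤ q * e := by
  rcases le_total e 0 with h | h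
  · rw [max_eq_right h, min_eq_left h]; nlinarith
  · rw [max_eq_left h, min_eq_right h]; nlinarith

lemma ptwise_max {a b q e : ℝ} (h1 : a ≤ q) (h2 : q ≤ b) :
    q * e ≤ a * min e 0 + b * max e 0 := by
  rcases le_total e 0 with h | h
  · rw [max_eq_right h, min_eq_left h]; nlinarith
  · rw [max_eq_left h, min_eq_right h]; nlinarith

end PucciAux

/-- The Pucci extremal operators are the infimum resp. supremum of `tr(P R)` over all
symmetric matrices `P` with `a I ≤ P ≤ b I` (in the Loewner order). -/
theorem pucci_isGLB_isLUB {n : ℕ} (hn : 1 ≤ n) (a b : ℝ) (ha : 0 < a) (hab : a ≤ b)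
    (R : Matrix (Fin n) (Fin n) ℝ) (hR : R.IsSymm) :
    IsGLB {x : ℝ | ∃ P : Matrix (Fin n) (Fin n) ℝ, P.IsSymm ∧
        (P - a • (1 : Matrix (Fin n) (Fin n) ℝ)).PosSemidef ∧
        (b • (1 : Matrix (Fin n) (Fin n) ℝ) - P).PosSemidef ∧ x = (P * R).trace}
      (pucciMinus R a b) ∧
    IsLUB {x : ℝ | ∃ P : Matrix (Fin n) (Fin n) ℝ, P.IsSymm ∧
        (P - a • (1 : Matrix (Fin n) (Fin n) ℝ)).PosSemidef ∧
        (b • (1 : Matrix (Fin n) (Fin n) ℝ) - P).PosSemidef ∧ x = (P * R).trace}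
      (pucciPlus R a b) := by
  have hRh : R.IsHermitian := by
    rwa [Matrix.IsHermitian, Matrix.conjTranspose_eq_transpose_of_trivial]
  set e : Fin n → ℝ := hRh.eigenvalues with he
  have hminus : pucciMinus R a b = ∑ i, (a * max (e i) 0 + b * min (e i) 0) := by
    rw [pucciMinus, dif_pos hRh, Finset.mul_sum, Finset.mul_sum, ← Finset.sum_add_distrib]
  have hplus : pucciPlus R a b = ∑ i, (a * min (e i) 0 + b * max (e i) 0) := by
    rw [pucciPlus, dif_pos hRh, Finset.mul_sum, Finset.mul_sum, ← Finset.sum_add_distrib]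
  constructor
  · refine IsLeast.isGLB ⟨?_, ?_⟩
    · have hm := PucciAux.mem_set (a := a) (b := b) R hRh
        (fun i => if 0 < e i then a else b)
        (fun i => by split_ifs <;> [exact le_refl a; exact hab])
        (fun i => by split_ifs <;> [exact hab; exact le_refl b])
      have : pucciMinus R a b = ∑ i, (if 0 < e i then a else b) * e i := by
        rw [hminus]
        refine Finset.sum_congr rfl fun i _ => ?_
        rcases lt_or_ge 0 (e i) with h | h
        · rw [if_pos h, max_eq_left h.le, min_eq_right h.le]; ring
        · rw [if_neg (not_lt.mpr h), max_eq_right h, min_eq_left h]; ring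
      rw [this]; exact hm
    · rintro x ⟨P, hs, h1, h2, rfl⟩
      rw [PucciAux.trace_PR R P hRh, hminus]
      refine Finset.sum_le_sum fun i _ => ?_
      obtain ⟨hqa, hqb⟩ := PucciAux.diag_mem hRh h1 h2 i
      exact PucciAux.ptwise_min hqa hqb
  · refine IsGreatest.isLUB ⟨?_, ?_⟩
    · have hm := PucciAux.mem_set (a := a) (b := b) R hRh
        (fun i => if e i < 0 then a else b)
        (fun i => by split_ifs <;> [exact le_refl a; exact hab])
        (fun i => by split_ifs <;> [exact hab; exact le_refl b])
      have : pucciPlus R a b = ∑ i, (if e i < 0 then a else b) * e i := by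
        rw [hplus]
        refine Finset.sum_congr rfl fun i _ => ?_
        rcases lt_or_ge (e i) 0 with h | h
        · rw [if_pos h, max_eq_right h.le, min_eq_left h.le]; ring
        · rw [if_neg (not_lt.mpr h), max_eq_left h, min_eq_right h]; ring
      rw [this]; exact hm
    · rintro x ⟨P, hs, h1, h2, rfl⟩
      rw [PucciAux.trace_PR R P hRh, hplus]
      refine Finset.sum_le_sum fun i _ => ?_
      obtain ⟨hqa, hqb⟩ := PucciAux.diag_mem hRh h1 h2 i
      exact PucciAux.ptwise_max hqa hqb
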